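/- For a radial kernel $k(x,y) = \Psi(\|x-y\|^2)$ with $\Psi$ four times differentiable, the Stein kernel $k_0(x,y) = \Delta_x\Delta_y k + u(x)^\top\nabla_x\Delta_y k + u(y)^\top\nabla_y\Delta_x k + u(x)^\top[\nabla_x\nabla_y^\top k]u(y)$ equals, with $z=\|x-y\|^2$: $16z^2\Psi^{(4)}(z) + 16(2+d)z\Psi'''(z) + 4(2+d)d\Psi''(z) + 4[2z\Psi'''(z)+(2+d)\Psi''(z)](u(x)-u(y))^\top(x-y) - 4\Psi''(z)\, u(x)^\top(x-y)(x-y)^\top u(y) - 2\Psi'(z)\, u(x)^\top u(y)$. -/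

import Mathlib

noncomputable def lap (d : ℕ) (f : EuclideanSpace ℝ (Fin d) → ℝ)
    (x : EuclideanSpace ℝ (Fin d)) : ℝ :=
  ∑ i, fderiv ℝ (fun y => fderiv ℝ f y (EuclideanSpace.single i 1)) x
    (EuclideanSpace.single i 1)

/-- `Δ_y k(x,y)` for the radial kernel `k(x,y) = Ψ(‖x-y‖²)`. -/
noncomputable def lapYrad (d : ℕ) (Ψ : ℝ → ℝ)
    (x y : EuclideanSpace ℝ (Fin d)) : ℝ :=
  ∑ j, fderiv ℝ (fun y' => fderiv ℝ (fun y'' => Ψ (‖x - y''‖ ^ 2)) y'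
      (EuclideanSpace.single j 1)) y (EuclideanSpace.single j 1)

/-- `Δ_x k(x,y)` for the radial kernel `k(x,y) = Ψ(‖x-y‖²)`. -/
noncomputable def lapXrad (d : ℕ) (Ψ : ℝ → ℝ)
    (x y : EuclideanSpace ℝ (Fin d)) : ℝ :=
  lap d (fun x' => Ψ (‖x' - y‖ ^ 2)) x

/-- `∂_{x_i}∂_{y_j} k(x,y)` for the radial kernel. -/
noncomputable def mixedRad (d : ℕ) (Ψ : ℝ → ℝ)
    (x y : EuclideanSpace ℝ (Fin d)) (i j : Fin d) : ℝ :=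
  fderiv ℝ (fun x' => fderiv ℝ (fun y' => Ψ (‖x' - y'‖ ^ 2)) y
    (EuclideanSpace.single j 1)) x (EuclideanSpace.single i 1)


variable {d : ℕ}

local notation "E" => EuclideanSpace ℝ (Fin d)

lemma deriv_contDiff {n : ℕ} {f : ℝ → ℝ} (hf : ContDiff ℝ (n+1 : ℕ) f) :
    ContDiff ℝ n (deriv f) := by
  have : ContDiff ℝ ((n : WithTop ℕ∞) + 1) f := by exact_mod_cast hf
  exact (contDiff_succ_iff_deriv.mp this).2.2

lemma diff_of_contDiff {n : ℕ} {f : ℝ → ℝ} (hf : ContDiff ℝ (n+1 : ℕ) f) :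
    Differentiable ℝ f := by
  have : ContDiff ℝ ((n : WithTop ℕ∞) + 1) f := by exact_mod_cast hf
  exact (contDiff_succ_iff_deriv.mp this).1

lemma sq_hasFDerivAt (c x : E) :
    HasFDerivAt (fun t : E => ‖t - c‖ ^ 2) ((2:ℝ) • (innerSL ℝ (x - c))) x := by
  have h := ((hasFDerivAt_id x).sub_const c).norm_sq
  refine h.congr_fderiv ?_
  ext v
  simp [two_smul]

lemma radial_hasFDerivAt (G : ℝ → ℝ) (hG : Differentiable ℝ G) (c x : E) :
    HasFDerivAt (fun t : E => G (‖t - c‖ ^ 2))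
      ((2 * deriv G (‖x - c‖ ^ 2)) • innerSL ℝ (x - c)) x := by
  have h := ((hG (‖x - c‖ ^ 2)).hasDerivAt).comp_hasFDerivAt x (sq_hasFDerivAt c x)
  refine h.congr_fderiv ?_
  ext v
  simp [mul_comm, mul_assoc, mul_left_comm]

lemma sub_coord (x c : E) (i : Fin d) : (x - c) i = x i - c i := rfl

lemma radial_fderiv_apply (G : ℝ → ℝ) (hG : Differentiable ℝ G) (c x : E) (v : E) :
    fderiv ℝ (fun t : E => G (‖t - c‖ ^ 2)) x v
      = 2 * deriv G (‖x - c‖ ^ 2) * (inner ℝ (x - c) v : ℝ) := by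
  rw [(radial_hasFDerivAt G hG c x).fderiv]
  simp only [ContinuousLinearMap.smul_apply, innerSL_apply_apply, smul_eq_mul]

lemma radial_fderiv_single (G : ℝ → ℝ) (hG : Differentiable ℝ G) (c x : E) (i : Fin d) :
    fderiv ℝ (fun t : E => G (‖t - c‖ ^ 2)) x (EuclideanSpace.single i 1)
      = 2 * deriv G (‖x - c‖ ^ 2) * (x i - c i) := by
  rw [radial_fderiv_apply G hG c x]
  congr 1
  have : (inner ℝ (x - c) (EuclideanSpace.single i (1:ℝ)) : ℝ) = (x - c) i := by
    simp [EuclideanSpace.inner_single_right]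
  rw [this, sub_coord]

lemma coord_hasFDerivAt (x : E) (i : Fin d) (a : ℝ) :
    HasFDerivAt (fun t : E => t i - a) (innerSL ℝ (EuclideanSpace.single i 1 : E)) x := by
  have hfun : (fun t : E => t i - a)
      = fun t => (innerSL ℝ (EuclideanSpace.single i 1 : E)) t - a := by
    funext t
    simp [EuclideanSpace.inner_single_left]
  rw [hfun]
  exact (innerSL ℝ (EuclideanSpace.single i 1 : E)).hasFDerivAt.sub_const a

lemma radial_second (G : ℝ → ℝ) (hG : ContDiff ℝ 2 G) (c x : E) (i j : Fin d) :
    fderiv ℝ (fun t : E => fderiv ℝ (fun s : E => G (‖s - c‖ ^ 2)) t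
        (EuclideanSpace.single i 1)) x (EuclideanSpace.single j 1)
      = 4 * deriv (deriv G) (‖x - c‖ ^ 2) * (x i - c i) * (x j - c j)
        + 2 * deriv G (‖x - c‖ ^ 2) * (if i = j then 1 else 0) := by
  have hG1 : Differentiable ℝ G := diff_of_contDiff (n := 1) (by exact_mod_cast hG)
  have hG' : Differentiable ℝ (deriv G) :=
    diff_of_contDiff (n := 0) (by exact_mod_cast deriv_contDiff (n := 1) (by exact_mod_cast hG))
  have hfun : (fun t : E => fderiv ℝ (fun s : E => G (‖s - c‖ ^ 2)) t
      (EuclideanSpace.single i 1)) = fun t => (2 * deriv G (‖t - c‖ ^ 2)) * (t i - c i) := by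
    funext t
    rw [radial_fderiv_single G hG1 c t i]
  rw [hfun]
  have h1 : HasFDerivAt (fun t : E => 2 * deriv G (‖t - c‖ ^ 2))
      ((2:ℝ) • ((2 * deriv (deriv G) (‖x - c‖ ^ 2)) • innerSL ℝ (x - c))) x :=
    (radial_hasFDerivAt (deriv G) hG' c x).const_mul 2
  have h2 := coord_hasFDerivAt x i (c i)
  have h := h1.mul h2
  rw [HasFDerivAt.fderiv (f := fun t : E => 2 * deriv G (‖t - c‖ ^ 2) * (t i - c i)) h]
  simp only [ContinuousLinearMap.add_apply, ContinuousLinearMap.smul_apply, innerSL_apply_apply,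
    smul_eq_mul]
  have e1 : (inner ℝ (x - c) (EuclideanSpace.single j (1:ℝ)) : ℝ) = x j - c j := by
    simp [EuclideanSpace.inner_single_right]
  have e2 : (inner ℝ (EuclideanSpace.single i (1:ℝ) : E) (EuclideanSpace.single j (1:ℝ)) : ℝ)
      = if i = j then 1 else 0 := by
    simp [EuclideanSpace.inner_single_left, EuclideanSpace.single_apply, eq_comm]
  rw [e1, e2]
  ring

lemma normsq_eq_sum (v : E) : ‖v‖ ^ 2 = ∑ i, v i ^ 2 := by
  rw [EuclideanSpace.norm_eq, Real.sq_sqrt]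
  · simp [sq_abs]
  · positivity

lemma radial_lap (G : ℝ → ℝ) (hG : ContDiff ℝ 2 G) (c x : E) :
    lap d (fun t : E => G (‖t - c‖ ^ 2)) x
      = 4 * ‖x - c‖ ^ 2 * deriv (deriv G) (‖x - c‖ ^ 2)
        + 2 * d * deriv G (‖x - c‖ ^ 2) := by
  unfold lap
  have : ∀ i : Fin d, fderiv ℝ (fun t : E => fderiv ℝ (fun s : E => G (‖s - c‖ ^ 2)) t
      (EuclideanSpace.single i 1)) x (EuclideanSpace.single i 1)
      = 4 * deriv (deriv G) (‖x - c‖ ^ 2) * (x i - c i) ^ 2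
        + 2 * deriv G (‖x - c‖ ^ 2) := by
    intro i
    rw [radial_second G hG c x i i]
    simp [sq]
    ring
  rw [Finset.sum_congr rfl fun i _ => this i, Finset.sum_add_distrib, ← Finset.mul_sum]
  have hsum : ∑ i, (x i - c i) ^ 2 = ‖x - c‖ ^ 2 := by
    rw [normsq_eq_sum (x - c)]
    exact Finset.sum_congr rfl fun i _ => by rw [sub_coord]
  rw [hsum]
  simp [Finset.sum_const, Finset.card_univ]
  ring

lemma radial_gradient (G : ℝ → ℝ) (hG : Differentiable ℝ G) (c x : E) :
    gradient (fun t : E => G (‖t - c‖ ^ 2)) x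
      = (2 * deriv G (‖x - c‖ ^ 2)) • (x - c) := by
  have h : HasGradientAt (fun t : E => G (‖t - c‖ ^ 2))
      ((2 * deriv G (‖x - c‖ ^ 2)) • (x - c)) x := by
    rw [hasGradientAt_iff_hasFDerivAt]
    have := radial_hasFDerivAt G hG c x
    refine this.congr_fderiv ?_
    ext v
    simp [InnerProductSpace.toDual_apply_apply, real_inner_smul_left]
  exact h.gradient

lemma lapYrad_eq (Ψ : ℝ → ℝ) (hΨ : ContDiff ℝ 2 Ψ) (x' y : E) :
    lapYrad d Ψ x' y
      = 4 * ‖x' - y‖ ^ 2 * deriv (deriv Ψ) (‖x' - y‖ ^ 2)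
        + 2 * d * deriv Ψ (‖x' - y‖ ^ 2) := by
  have hfun : (fun y'' : E => Ψ (‖x' - y''‖ ^ 2)) = fun y'' => Ψ (‖y'' - x'‖ ^ 2) := by
    funext t; rw [norm_sub_rev]
  have : lapYrad d Ψ x' y = lap d (fun t : E => Ψ (‖t - x'‖ ^ 2)) y := by
    unfold lapYrad lap
    rw [hfun]
  rw [this, radial_lap Ψ hΨ x' y, norm_sub_rev]

lemma lapXrad_eq (Ψ : ℝ → ℝ) (hΨ : ContDiff ℝ 2 Ψ) (x y' : E) :
    lapXrad d Ψ x y'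
      = 4 * ‖x - y'‖ ^ 2 * deriv (deriv Ψ) (‖x - y'‖ ^ 2)
        + 2 * d * deriv Ψ (‖x - y'‖ ^ 2) := by
  unfold lapXrad
  exact radial_lap Ψ hΨ y' x

lemma mixedRad_eq (Ψ : ℝ → ℝ) (hΨ : ContDiff ℝ 2 Ψ) (x y : E) (i j : Fin d) :
    mixedRad d Ψ x y i j
      = -4 * deriv (deriv Ψ) (‖x - y‖ ^ 2) * (x i - y i) * (x j - y j)
        - 2 * deriv Ψ (‖x - y‖ ^ 2) * (if i = j then 1 else 0) := by
  have hΨ1 : Differentiable ℝ Ψ := diff_of_contDiff (n := 1) (by exact_mod_cast hΨ)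
  have hΨ' : Differentiable ℝ (deriv Ψ) :=
    diff_of_contDiff (n := 0) (by exact_mod_cast deriv_contDiff (n := 1) (by exact_mod_cast hΨ))
  unfold mixedRad
  have hfun : (fun x' : E => fderiv ℝ (fun y' : E => Ψ (‖x' - y'‖ ^ 2)) y
      (EuclideanSpace.single j 1))
      = fun x' => (2 * deriv Ψ (‖x' - y‖ ^ 2)) * (y j - x' j) := by
    funext x'
    have h2 : (fun y' : E => Ψ (‖x' - y'‖ ^ 2)) = fun y' => Ψ (‖y' - x'‖ ^ 2) := by
      funext t; rw [norm_sub_rev]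
    rw [h2, radial_fderiv_single Ψ hΨ1 x' y j, norm_sub_rev]
  rw [hfun]
  have h1 : HasFDerivAt (fun t : E => 2 * deriv Ψ (‖t - y‖ ^ 2))
      ((2:ℝ) • ((2 * deriv (deriv Ψ) (‖x - y‖ ^ 2)) • innerSL ℝ (x - y))) x :=
    (radial_hasFDerivAt (deriv Ψ) hΨ' y x).const_mul 2
  have h2 : HasFDerivAt (fun t : E => y j - t j)
      (-(innerSL ℝ (EuclideanSpace.single j 1 : E))) x := by
    have : (fun t : E => y j - t j) = fun t => -(t j - y j) := by funext t; ring
    rw [this]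
    exact (coord_hasFDerivAt x j (y j)).neg
  have h := h1.mul h2
  rw [HasFDerivAt.fderiv (f := fun t : E => 2 * deriv Ψ (‖t - y‖ ^ 2) * (y j - t j)) h]
  simp only [ContinuousLinearMap.add_apply, ContinuousLinearMap.smul_apply,
    ContinuousLinearMap.neg_apply, innerSL_apply_apply, smul_eq_mul]
  have e1 : (inner ℝ (x - y) (EuclideanSpace.single i (1:ℝ)) : ℝ) = x i - y i := by
    simp [EuclideanSpace.inner_single_right]
  have e2 : (inner ℝ (EuclideanSpace.single j (1:ℝ) : E) (EuclideanSpace.single i (1:ℝ)) : ℝ)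
      = if i = j then 1 else 0 := by
    simp [EuclideanSpace.inner_single_left, EuclideanSpace.single_apply, eq_comm]
  rw [e1, e2]
  ring

lemma hasDerivAt_G1 (dd : ℝ) (Ψ : ℝ → ℝ) (hΨ : ContDiff ℝ 4 Ψ) (z : ℝ) :
    HasDerivAt (fun t => 4 * t * deriv (deriv Ψ) t + 2 * dd * deriv Ψ t)
      (4 * deriv (deriv Ψ) z + 4 * z * deriv (deriv (deriv Ψ)) z
        + 2 * dd * deriv (deriv Ψ) z) z := by
  have hA : ContDiff ℝ 3 (deriv Ψ) := deriv_contDiff (n := 3) (by exact_mod_cast hΨ)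
  have hB : ContDiff ℝ 2 (deriv (deriv Ψ)) := deriv_contDiff (n := 2) (by exact_mod_cast hA)
  have hAd : Differentiable ℝ (deriv Ψ) := diff_of_contDiff (n := 2) (by exact_mod_cast hA)
  have hBd : Differentiable ℝ (deriv (deriv Ψ)) :=
    diff_of_contDiff (n := 1) (by exact_mod_cast hB)
  have t1 : HasDerivAt (fun t : ℝ => 4 * t) 4 z := by
    simpa using (hasDerivAt_id z).const_mul 4
  have t2 : HasDerivAt (deriv (deriv Ψ)) (deriv (deriv (deriv Ψ)) z) z := (hBd z).hasDerivAt
  have t3 : HasDerivAt (fun t => 2 * dd * deriv Ψ t) (2 * dd * deriv (deriv Ψ) z) z :=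
    ((hAd z).hasDerivAt).const_mul (2 * dd)
  exact (t1.mul t2).add t3

lemma hasDerivAt_dG1 (dd : ℝ) (Ψ : ℝ → ℝ) (hΨ : ContDiff ℝ 4 Ψ) (z : ℝ) :
    HasDerivAt (fun t => 4 * deriv (deriv Ψ) t + 4 * t * deriv (deriv (deriv Ψ)) t
        + 2 * dd * deriv (deriv Ψ) t)
      (4 * deriv (deriv (deriv Ψ)) z + (4 * deriv (deriv (deriv Ψ)) z
          + 4 * z * deriv (deriv (deriv (deriv Ψ))) z)
        + 2 * dd * deriv (deriv (deriv Ψ)) z) z := by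
  have hA : ContDiff ℝ 3 (deriv Ψ) := deriv_contDiff (n := 3) (by exact_mod_cast hΨ)
  have hB : ContDiff ℝ 2 (deriv (deriv Ψ)) := deriv_contDiff (n := 2) (by exact_mod_cast hA)
  have hC : ContDiff ℝ 1 (deriv (deriv (deriv Ψ))) :=
    deriv_contDiff (n := 1) (by exact_mod_cast hB)
  have hBd : Differentiable ℝ (deriv (deriv Ψ)) :=
    diff_of_contDiff (n := 1) (by exact_mod_cast hB)
  have hCd : Differentiable ℝ (deriv (deriv (deriv Ψ))) :=
    diff_of_contDiff (n := 0) (by exact_mod_cast hC)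
  have t1 : HasDerivAt (fun t => 4 * deriv (deriv Ψ) t)
      (4 * deriv (deriv (deriv Ψ)) z) z := ((hBd z).hasDerivAt).const_mul 4
  have t2a : HasDerivAt (fun t : ℝ => 4 * t) 4 z := by
    simpa using (hasDerivAt_id z).const_mul 4
  have t2b : HasDerivAt (deriv (deriv (deriv Ψ)))
      (deriv (deriv (deriv (deriv Ψ))) z) z := (hCd z).hasDerivAt
  have t3 : HasDerivAt (fun t => 2 * dd * deriv (deriv Ψ) t)
      (2 * dd * deriv (deriv (deriv Ψ)) z) z := ((hBd z).hasDerivAt).const_mul (2 * dd)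
  exact (t1.add (t2a.mul t2b)).add t3

/-- Lemma 5 of the paper: closed form of the Stein kernel `k₀`
for a radial base kernel `k(x,y) = Ψ(‖x-y‖²)`. -/
theorem stmt4 (d : ℕ) (Ψ : ℝ → ℝ) (hΨ : ContDiff ℝ 4 Ψ)
    (p : EuclideanSpace ℝ (Fin d) → ℝ) (hp : ∀ x, 0 < p x)
    (hlogp : ContDiff ℝ 1 fun x => Real.log (p x))
    (u : EuclideanSpace ℝ (Fin d) → EuclideanSpace ℝ (Fin d))
    (hu : ∀ x, u x = gradient (fun t => Real.log (p t)) x)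
    (x y : EuclideanSpace ℝ (Fin d)) :
    lap d (fun x' => lapYrad d Ψ x' y) x
      + (inner ℝ (u x) (gradient (fun x' => lapYrad d Ψ x' y) x) : ℝ)
      + (inner ℝ (u y) (gradient (fun y' => lapXrad d Ψ x y') y) : ℝ)
      + ∑ i, ∑ j, u x i * mixedRad d Ψ x y i j * u y j
    = 16 * (‖x - y‖ ^ 2) ^ 2 * deriv^[4] Ψ (‖x - y‖ ^ 2)
      + 16 * (2 + d) * ‖x - y‖ ^ 2 * deriv^[3] Ψ (‖x - y‖ ^ 2)
      + 4 * (2 + d) * d * deriv^[2] Ψ (‖x - y‖ ^ 2)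
      + 4 * (2 * ‖x - y‖ ^ 2 * deriv^[3] Ψ (‖x - y‖ ^ 2)
          + (2 + d) * deriv^[2] Ψ (‖x - y‖ ^ 2)) * (inner ℝ (u x - u y) (x - y) : ℝ)
      - 4 * deriv^[2] Ψ (‖x - y‖ ^ 2)
          * (inner ℝ (u x) (x - y) : ℝ) * (inner ℝ (x - y) (u y) : ℝ)
      - 2 * deriv Ψ (‖x - y‖ ^ 2) * (inner ℝ (u x) (u y) : ℝ) := by
  have hΨ2 : ContDiff ℝ 2 Ψ := hΨ.of_le (by norm_num)
  have hA3 : ContDiff ℝ 3 (deriv Ψ) := deriv_contDiff (n := 3) (by exact_mod_cast hΨ)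
  have hB2 : ContDiff ℝ 2 (deriv (deriv Ψ)) := deriv_contDiff (n := 2) (by exact_mod_cast hA3)
  set G1 : ℝ → ℝ := fun t => 4 * t * deriv (deriv Ψ) t + 2 * (d:ℝ) * deriv Ψ t with hG1def
  have hG1cd : ContDiff ℝ 2 G1 := by
    rw [hG1def]
    exact ((contDiff_const.mul contDiff_id).mul hB2).add
      (contDiff_const.mul (hA3.of_le (by norm_num)))
  have hG1diff : Differentiable ℝ G1 := hG1cd.differentiable (by norm_num)
  have hf1 : (fun x' : EuclideanSpace ℝ (Fin d) => lapYrad d Ψ x' y)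
      = fun x' => G1 (‖x' - y‖ ^ 2) := by
    funext x'
    exact lapYrad_eq Ψ hΨ2 x' y
  have hf2 : (fun y' : EuclideanSpace ℝ (Fin d) => lapXrad d Ψ x y')
      = fun y' => G1 (‖y' - x‖ ^ 2) := by
    funext y'
    rw [lapXrad_eq Ψ hΨ2 x y', norm_sub_rev]
  rw [hf1, hf2, radial_lap G1 hG1cd y x, radial_gradient G1 hG1diff y x,
    radial_gradient G1 hG1diff x y, real_inner_smul_right, real_inner_smul_right,
    norm_sub_rev y x, show (y - x : EuclideanSpace ℝ (Fin d)) = -(x - y) from (neg_sub x y).symm,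
    inner_neg_right]
  -- derivatives of G1
  have hdG1 : ∀ t, deriv G1 t = 4 * deriv (deriv Ψ) t + 4 * t * deriv (deriv (deriv Ψ)) t
      + 2 * (d:ℝ) * deriv (deriv Ψ) t := fun t => (hasDerivAt_G1 (d:ℝ) Ψ hΨ t).deriv
  have hddG1 : deriv (deriv G1) (‖x - y‖ ^ 2)
      = 4 * deriv (deriv (deriv Ψ)) (‖x - y‖ ^ 2)
        + (4 * deriv (deriv (deriv Ψ)) (‖x - y‖ ^ 2)
          + 4 * ‖x - y‖ ^ 2 * deriv (deriv (deriv (deriv Ψ))) (‖x - y‖ ^ 2))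
        + 2 * (d:ℝ) * deriv (deriv (deriv Ψ)) (‖x - y‖ ^ 2) := by
    have : deriv G1 = fun t => 4 * deriv (deriv Ψ) t + 4 * t * deriv (deriv (deriv Ψ)) t
        + 2 * (d:ℝ) * deriv (deriv Ψ) t := funext hdG1
    rw [this]
    exact (hasDerivAt_dG1 (d:ℝ) Ψ hΨ _).deriv
  -- the mixed double sum
  have icoord : ∀ a b : EuclideanSpace ℝ (Fin d), (inner ℝ a b : ℝ) = ∑ i, a i * b i :=
    fun a b => by simp [PiLp.inner_apply, RCLike.inner_apply, mul_comm]
  have key : ∀ i, (∑ j, u x i * mixedRad d Ψ x y i j * u y j)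
      = (-4 * deriv (deriv Ψ) (‖x - y‖ ^ 2)) * ((u x i * (x i - y i))
          * (∑ j, (x j - y j) * u y j))
        + (-2 * deriv Ψ (‖x - y‖ ^ 2)) * (u x i * u y i) := by
    intro i
    have hterm : ∀ j, u x i * mixedRad d Ψ x y i j * u y j
        = (-4 * deriv (deriv Ψ) (‖x - y‖ ^ 2)) * ((u x i * (x i - y i))
            * ((x j - y j) * u y j))
          + (-2 * deriv Ψ (‖x - y‖ ^ 2)) * (if i = j then u x i * u y j else 0) := by
      intro j
      rw [mixedRad_eq Ψ hΨ2 x y i j]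
      by_cases h : i = j <;> simp [h] <;> ring
    rw [Finset.sum_congr rfl fun j _ => hterm j, Finset.sum_add_distrib,
      ← Finset.mul_sum, ← Finset.mul_sum, ← Finset.mul_sum, Finset.sum_ite_eq]
    simp
  have hsum : (∑ i, ∑ j, u x i * mixedRad d Ψ x y i j * u y j)
      = -4 * deriv (deriv Ψ) (‖x - y‖ ^ 2) * (inner ℝ (u x) (x - y) : ℝ)
          * (inner ℝ (x - y) (u y) : ℝ)
        - 2 * deriv Ψ (‖x - y‖ ^ 2) * (inner ℝ (u x) (u y) : ℝ) := by
    rw [Finset.sum_congr rfl fun i _ => key i, Finset.sum_add_distrib,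
      ← Finset.mul_sum, ← Finset.mul_sum, ← Finset.sum_mul]
    rw [icoord (u x) (x - y), icoord (x - y) (u y), icoord (u x) (u y)]
    have hc : ∀ i, (x - y : EuclideanSpace ℝ (Fin d)) i = x i - y i := fun i => rfl
    simp only [hc]
    ring
  rw [hsum, hdG1, hddG1]
  have it2 : deriv^[2] Ψ = deriv (deriv Ψ) := rfl
  have it3 : deriv^[3] Ψ = deriv (deriv (deriv Ψ)) := rfl
  have it4 : deriv^[4] Ψ = deriv (deriv (deriv (deriv Ψ))) := rfl
  rw [it2, it3, it4]
  simp only [inner_sub_left]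
  push_cast
  ring
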